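/- Let T = (S,Σ,κ) be an STS, μ a probability measure on S, and B ∈ Σ. If T is strongly decisive w.r.t. B from μ (SD(μ,B)), then T is fair w.r.t. B from μ: for every B' ∈ PreProb(B) with Prob_μ(GF B') > 0, one has Prob_μ(GF B ∩ GF B') = Prob_μ(GF B'). -/

import Mathlib

open MeasureTheory ProbabilityTheory ENNReal Filter Topology

namespace STS

variable {S : Type*} [MeasurableSpace S]

/-- Probability of the cylinder `Cyl(A 0, …, A n)` for the Markov chain with kernel `κ`
and initial distribution `μ`. -/
noncomputable def cylProb (κ : Kernel S S) : ℕ → Measure S → (ℕ → Set S) → ℝ≥0∞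
  | 0, μ, A => μ (A 0)
  | n + 1, μ, A => ∫⁻ s in A 0, cylProb κ n (κ s) (fun i => A (i + 1)) ∂μ

/-- `P` assigns to each initial (probability) distribution the path measure (on `ℕ → S`,
with the product σ-algebra) of the time-homogeneous Markov chain with transition kernel `κ`,
as given by the Ionescu–Tulcea construction: it is the unique probability measure giving
cylinders their prescribed probabilities. -/
def IsPathMeasure (κ : Kernel S S) (P : Measure S → Measure (ℕ → S)) : Prop :=
  ∀ μ : Measure S, IsProbabilityMeasure μ →
    IsProbabilityMeasure (P μ) ∧
    ∀ (n : ℕ) (A : ℕ → Set S), (∀ i, MeasurableSet (A i)) →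
      P μ {ρ | ∀ i ≤ n, ρ i ∈ A i} = cylProb κ n μ A

/-- The path event `F B`: eventually reach `B`. -/
def evF (B : Set S) : Set (ℕ → S) := {ρ | ∃ k, ρ k ∈ B}

/-- The path event `F≤n B`. -/
def evFle (n : ℕ) (B : Set S) : Set (ℕ → S) := {ρ | ∃ k ≤ n, ρ k ∈ B}

/-- The path event `F≥p B`. -/
def evFge (p : ℕ) (B : Set S) : Set (ℕ → S) := {ρ | ∃ k, p ≤ k ∧ ρ k ∈ B}

/-- The path event `GF B`: visit `B` infinitely often. -/
def evGF (B : Set S) : Set (ℕ → S) := {ρ | ∀ n, ∃ k, n ≤ k ∧ ρ k ∈ B}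

/-- The path event `FG B`: eventually stay in `B` forever. -/
def evFG (B : Set S) : Set (ℕ → S) := {ρ | ∃ n, ∀ k, n ≤ k → ρ k ∈ B}

/-- The until event `B' U B`. -/
def evU (B' B : Set S) : Set (ℕ → S) := {ρ | ∃ k, ρ k ∈ B ∧ ∀ j < k, ρ j ∈ B'}

/-- The bounded until event `B' U≤n B`. -/
def evUle (n : ℕ) (B' B : Set S) : Set (ℕ → S) := {ρ | ∃ k ≤ n, ρ k ∈ B ∧ ∀ j < k, ρ j ∈ B'}

/-- The avoid-set `B̃` of `B`: states from which `B` is reached with probability `0`. -/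
def avoid (P : Measure S → Measure (ℕ → S)) (B : Set S) : Set S :=
  {s | P (Measure.dirac s) (evF B) = 0}

/-- `T` is decisive w.r.t. `B` from `μ`. -/
def Decisive (P : Measure S → Measure (ℕ → S)) (μ : Measure S) (B : Set S) : Prop :=
  P μ (evF B ∪ evF (avoid P B)) = 1

/-- `T` is strongly decisive w.r.t. `B` from `μ`. -/
def StronglyDecisive (P : Measure S → Measure (ℕ → S)) (μ : Measure S) (B : Set S) : Prop :=
  P μ (evGF B ∪ evF (avoid P B)) = 1

/-- `T` is persistently decisive w.r.t. `B` from `μ`. -/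
def PersistentlyDecisive (P : Measure S → Measure (ℕ → S)) (μ : Measure S) (B : Set S) : Prop :=
  ∀ p : ℕ, P μ (evFge p B ∪ evFge p (avoid P B)) = 1

/-- `PreProb(B)`: measurable sets `B'` from which `B` is reached in one step with positive
probability, whatever the initial distribution concentrated on `B'`. -/
def PreProb (P : Measure S → Measure (ℕ → S)) (B : Set S) : Set (Set S) :=
  {B' | MeasurableSet B' ∧ ∀ μ' : Measure S, IsProbabilityMeasure μ' → μ' B' = 1 →
    0 < P μ' {ρ | ρ 0 ∈ B' ∧ ρ 1 ∈ B}}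

/-- `T` is fair w.r.t. `B` from `μ`. -/
def Fair (P : Measure S → Measure (ℕ → S)) (μ : Measure S) (B : Set S) : Prop :=
  ∀ B' ∈ PreProb P B, 0 < P μ (evGF B') →
    P μ (evGF B ∩ evGF B') = P μ (evGF B')

/-- The one-step measure transformer `Ω_T`. -/
noncomputable def Omega (κ : Kernel S S) (μ : Measure S) : Measure S :=
  μ.bind (fun s => κ s)

/-- Two measures are qualitatively equivalent if they have the same null (measurable) sets. -/
def QualEquiv {T : Type*} [MeasurableSpace T] (μ ν : Measure T) : Prop :=
  ∀ A : Set T, MeasurableSet A → (μ A = 0 ↔ ν A = 0)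

/-- `T₂ = (S₂,κ₂)` is an `α`-abstraction of `T₁ = (S₁,κ₁)`. -/
def IsAbstraction {S₁ S₂ : Type*} [MeasurableSpace S₁] [MeasurableSpace S₂]
    (κ₁ : Kernel S₁ S₁) (κ₂ : Kernel S₂ S₂) (α : S₁ → S₂) : Prop :=
  ∀ μ : Measure S₁, IsProbabilityMeasure μ →
    QualEquiv (Measure.map α (Omega κ₁ μ)) (Omega κ₂ (Measure.map α μ))


lemma measurable_cylProb_kernel (κ : Kernel S S) [IsSFiniteKernel κ] :
    ∀ (n : ℕ) (A : ℕ → Set S), (∀ i, MeasurableSet (A i)) →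
      Measurable (fun s => cylProb κ n (κ s) A)
  | 0, A, hA => by
    simpa [cylProb] using κ.measurable_coe (hA 0)
  | n + 1, A, hA => by
    have ih := measurable_cylProb_kernel κ n (fun i => A (i + 1)) (fun i => hA (i + 1))
    have : (fun s => cylProb κ (n + 1) (κ s) A)
        = fun s => ∫⁻ t, (A 0).indicator (fun t => cylProb κ n (κ t) (fun i => A (i + 1))) t ∂κ s := by
      funext s
      rw [cylProb, ← lintegral_indicator (hA 0)]
    rw [this]
    exact Measurable.lintegral_kernel_prod_right
      (((ih.indicator (hA 0)).comp measurable_snd :))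

lemma measurable_cylProb_dirac (κ : Kernel S S) [IsSFiniteKernel κ] :
    ∀ (n : ℕ) (A : ℕ → Set S), (∀ i, MeasurableSet (A i)) →
      Measurable (fun s : S => cylProb κ n (Measure.dirac s) A)
  | 0, A, hA => by
    have : (fun s : S => cylProb κ 0 (Measure.dirac s) A)
        = fun s => (A 0).indicator (fun _ => (1:ℝ≥0∞)) s := by
      funext s; rw [cylProb, Measure.dirac_apply' _ (hA 0)]; rfl
    rw [this]
    exact measurable_const.indicator (hA 0)
  | n + 1, A, hA => by
    have hg := measurable_cylProb_kernel κ n (fun i => A (i + 1)) (fun i => hA (i + 1))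
    have : (fun s : S => cylProb κ (n + 1) (Measure.dirac s) A)
        = fun s => (A 0).indicator (fun t => cylProb κ n (κ t) (fun i => A (i + 1))) s := by
      funext s
      rw [cylProb, ← lintegral_indicator (hA 0), lintegral_dirac' _ (hg.indicator (hA 0))]
    rw [this]
    exact hg.indicator (hA 0)

lemma cylProb_dirac_succ (κ : Kernel S S) [IsSFiniteKernel κ] (n : ℕ) (A : ℕ → Set S)
    (hA : ∀ i, MeasurableSet (A i)) (h0 : A 0 = Set.univ) (s : S) :
    cylProb κ (n + 1) (Measure.dirac s) A = cylProb κ n (κ s) (fun i => A (i + 1)) := by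
  rw [cylProb, h0, Measure.restrict_univ,
    lintegral_dirac' _ (measurable_cylProb_kernel κ n _ (fun i => hA (i + 1)))]


lemma cylProb_zero_of_avoid (κ : Kernel S S) [IsMarkovKernel κ]
    (P : Measure S → Measure (ℕ → S)) (hP : IsPathMeasure κ P) (B : Set S) :
    ∀ (k j : ℕ), k < j → ∀ (μ : Measure S) (A : ℕ → Set S), (∀ i, MeasurableSet (A i)) →
      A k ⊆ avoid P B → A j ⊆ B → cylProb κ j μ A = 0
  | 0, j, hkj, μ, A, hA, hk, hj => by
    obtain ⟨j', rfl⟩ : ∃ j', j = j' + 1 := ⟨j - 1, by omega⟩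
    rw [cylProb]
    have hzero : ∀ s ∈ A 0, cylProb κ j' (κ s) (fun i => A (i+1)) = 0 := by
      intro s hs
      set A₂ : ℕ → Set S := fun i => if i = 0 then Set.univ else A i with hA₂
      have hA₂m : ∀ i, MeasurableSet (A₂ i) := by
        intro i; by_cases h : i = 0 <;> simp [hA₂, h, hA i]
      have h1 : cylProb κ (j' + 1) (Measure.dirac s) A₂
          = cylProb κ j' (κ s) (fun i => A (i + 1)) := by
        rw [cylProb_dirac_succ κ j' A₂ hA₂m (by simp [hA₂]) s]
        simp [hA₂]
      have h2 := (hP (Measure.dirac s) (by infer_instance)).2 (j' + 1) A₂ hA₂m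
      have hsub : {ρ : ℕ → S | ∀ i ≤ j' + 1, ρ i ∈ A₂ i} ⊆ evF B := by
        intro ρ hρ
        exact ⟨j' + 1, hj (by simpa [hA₂] using hρ (j' + 1) le_rfl)⟩
      have h0 : P (Measure.dirac s) {ρ : ℕ → S | ∀ i ≤ j' + 1, ρ i ∈ A₂ i} = 0 :=
        le_antisymm (le_trans (measure_mono hsub) (le_of_eq (hk hs))) zero_le
      rw [← h1, ← h2, h0]
    calc ∫⁻ s in A 0, cylProb κ j' (κ s) (fun i => A (i+1)) ∂μ
        = ∫⁻ _ in A 0, 0 ∂μ := setLIntegral_congr_fun (hA 0) hzero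
      _ = 0 := by simp
  | k + 1, j, hkj, μ, A, hA, hk, hj => by
    obtain ⟨j', rfl⟩ : ∃ j', j = j' + 1 := ⟨j - 1, by omega⟩
    rw [cylProb]
    have : ∀ s, cylProb κ j' (κ s) (fun i => A (i + 1)) = 0 := fun s =>
      cylProb_zero_of_avoid κ P hP B k j' (by omega) (κ s) _ (fun i => hA (i + 1)) hk hj
    simp [this]

/-- The π-system of basic cylinders. -/
def cylSets (S : Type*) [MeasurableSpace S] : Set (Set (ℕ → S)) :=
  {X | ∃ (n : ℕ) (A : ℕ → Set S), (∀ i, MeasurableSet (A i)) ∧ X = {ρ | ∀ i ≤ n, ρ i ∈ A i}}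

lemma measurableSet_cylSet {n : ℕ} {A : ℕ → Set S} (hA : ∀ i, MeasurableSet (A i)) :
    MeasurableSet {ρ : ℕ → S | ∀ i ≤ n, ρ i ∈ A i} := by
  have : {ρ : ℕ → S | ∀ i ≤ n, ρ i ∈ A i} = ⋂ i, {ρ : ℕ → S | i ≤ n → ρ i ∈ A i} := by
    ext ρ; simp
  rw [this]
  refine MeasurableSet.iInter fun i => ?_
  by_cases h : i ≤ n
  · have : {ρ : ℕ → S | i ≤ n → ρ i ∈ A i} = (fun ρ : ℕ → S => ρ i) ⁻¹' A i := by
      ext ρ; simp [h]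
    rw [this]; exact measurable_pi_apply i (hA i)
  · have : {ρ : ℕ → S | i ≤ n → ρ i ∈ A i} = Set.univ := by
      ext ρ; simp [h]
    rw [this]; exact MeasurableSet.univ

lemma generateFrom_cylSets :
    (inferInstance : MeasurableSpace (ℕ → S)) = MeasurableSpace.generateFrom (cylSets S) := by
  refine le_antisymm ?_ (MeasurableSpace.generateFrom_le ?_)
  · rw [show (inferInstance : MeasurableSpace (ℕ → S)) = MeasurableSpace.pi from rfl]
    refine iSup_le fun k => ?_
    rw [← measurable_iff_comap_le]
    intro E hE
    refine MeasurableSpace.measurableSet_generateFrom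
      ⟨k, fun i => if i = k then E else Set.univ, fun i => by by_cases h : i = k <;> simp [h, hE], ?_⟩
    ext ρ
    simp only [Set.mem_preimage, Set.mem_setOf_eq]
    constructor
    · intro h i _
      by_cases hik : i = k
      · subst hik; simpa using h
      · simp [hik]
    · intro h; simpa using h k le_rfl
  · rintro X ⟨n, A, hA, rfl⟩
    exact measurableSet_cylSet hA

lemma isPiSystem_cylSets : IsPiSystem (cylSets S) := by
  rintro X ⟨n, A, hA, rfl⟩ Y ⟨n', A', hA', rfl⟩ -
  refine ⟨max n n', fun i => (if i ≤ n then A i else Set.univ) ∩ (if i ≤ n' then A' i else Set.univ),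
    fun i => MeasurableSet.inter (by split <;> simp [hA i]) (by split <;> simp [hA' i]), ?_⟩
  ext ρ
  simp only [Set.mem_inter_iff, Set.mem_setOf_eq]
  constructor
  · rintro ⟨h1, h2⟩ i hi
    constructor <;> split <;> simp_all
  · intro h
    constructor
    · intro i hi
      have := (h i (le_trans hi (le_max_left _ _))).1
      simpa [hi] using this
    · intro i hi
      have := (h i (le_trans hi (le_max_right _ _))).2
      simpa [hi] using this

lemma measurable_pathMeasure_dirac (κ : Kernel S S) [IsMarkovKernel κ]
    (P : Measure S → Measure (ℕ → S)) (hP : IsPathMeasure κ P)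
    {X : Set (ℕ → S)} (hX : MeasurableSet X) :
    Measurable fun s : S => P (Measure.dirac s) X := by
  have hprob : ∀ s : S, IsProbabilityMeasure (P (Measure.dirac s)) :=
    fun s => (hP (Measure.dirac s) (by infer_instance)).1
  refine MeasurableSpace.induction_on_inter (C := fun X _ => Measurable fun s : S => P (Measure.dirac s) X) generateFrom_cylSets isPiSystem_cylSets ?_ ?_ ?_ ?_ _ hX
  · simp
  · rintro X ⟨n, A, hA, rfl⟩
    have : (fun s : S => P (Measure.dirac s) {ρ | ∀ i ≤ n, ρ i ∈ A i})
        = fun s => cylProb κ n (Measure.dirac s) A := by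
      funext s; exact (hP (Measure.dirac s) (by infer_instance)).2 n A hA
    rw [this]
    exact measurable_cylProb_dirac κ n A hA
  · intro t ht h
    have : (fun s : S => P (Measure.dirac s) tᶜ) = fun s => 1 - P (Measure.dirac s) t := by
      funext s
      have := hprob s
      rw [measure_compl ht (measure_ne_top _ _), measure_univ]
    rw [this]
    exact measurable_const.sub h
  · intro f hdis hmeas h
    have : (fun s : S => P (Measure.dirac s) (⋃ i, f i))
        = fun s => ∑' i, P (Measure.dirac s) (f i) := by
      funext s; exact measure_iUnion hdis hmeas
    rw [this]
    exact Measurable.ennreal_tsum h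

lemma measurableSet_evF {B : Set S} (hB : MeasurableSet B) : MeasurableSet (evF B) := by
  have : evF B = ⋃ k, (fun ρ : ℕ → S => ρ k) ⁻¹' B := by
    ext ρ; simp [evF]
  rw [this]
  exact MeasurableSet.iUnion fun k => measurable_pi_apply k hB

lemma measurableSet_avoid (κ : Kernel S S) [IsMarkovKernel κ]
    (P : Measure S → Measure (ℕ → S)) (hP : IsPathMeasure κ P)
    {B : Set S} (hB : MeasurableSet B) : MeasurableSet (avoid P B) :=
  measurable_pathMeasure_dirac κ P hP (measurableSet_evF hB) (measurableSet_singleton 0)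

noncomputable def cylM (κ : Kernel S S) : ℕ → Measure S → (ℕ → Set S) → Measure S
  | 0, μ, A => μ.restrict (A 0)
  | n + 1, μ, A => (μ.restrict (A 0)).bind (fun s => cylM κ n (κ s) (fun i => A (i + 1)))

lemma cylM_aux (κ : Kernel S S) [IsSFiniteKernel κ] :
    ∀ (n : ℕ) (A : ℕ → Set S), (∀ i, MeasurableSet (A i)) →
      (∀ (μ : Measure S) (E : Set S), MeasurableSet E →
        cylM κ n μ A E = cylProb κ n μ (fun i => if i = n then A n ∩ E else A i))
      ∧ Measurable (fun s => cylM κ n (κ s) A) := by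
  intro n
  induction n with
  | zero =>
    intro A hA
    have happ : ∀ (μ : Measure S) (E : Set S), MeasurableSet E →
        cylM κ 0 μ A E = cylProb κ 0 μ (fun i => if i = 0 then A 0 ∩ E else A i) := by
      intro μ E hE
      rw [cylM, Measure.restrict_apply hE, cylProb]
      simp [Set.inter_comm]
    refine ⟨happ, ?_⟩
    refine Measure.measurable_measure.mpr fun E hE => ?_
    have : (fun s => cylM κ 0 (κ s) A E)
        = fun s => cylProb κ 0 (κ s) (fun i => if i = 0 then A 0 ∩ E else A i) :=
      funext fun s => happ (κ s) E hE
    rw [this]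
    exact measurable_cylProb_kernel κ 0 _ (fun i => by
      by_cases h : i = 0 <;> simp [h, (hA 0).inter hE, hA i])
  | succ n ih =>
    intro A hA
    have ihA := ih (fun i => A (i + 1)) (fun i => hA (i + 1))
    have happ : ∀ (μ : Measure S) (E : Set S), MeasurableSet E →
        cylM κ (n + 1) μ A E
          = cylProb κ (n + 1) μ (fun i => if i = n + 1 then A (n + 1) ∩ E else A i) := by
      intro μ E hE
      rw [cylM, Measure.bind_apply hE ihA.2.aemeasurable]
      have hr : cylProb κ (n + 1) μ (fun i => if i = n + 1 then A (n + 1) ∩ E else A i)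
          = ∫⁻ s in A 0,
              cylProb κ n (κ s) (fun i => if i = n then A (n + 1) ∩ E else A (i + 1)) ∂μ := by
        rw [cylProb]
        congr 1
        all_goals try (funext s; congr 1; funext i; by_cases h : i = n <;> simp [h])
        all_goals try (congr 1; simp)
      rw [hr]
      refine lintegral_congr fun s => ?_
      rw [ihA.1 (κ s) E hE]
    refine ⟨happ, ?_⟩
    refine Measure.measurable_measure.mpr fun E hE => ?_
    have : (fun s => cylM κ (n + 1) (κ s) A E)
        = fun s => cylProb κ (n + 1) (κ s) (fun i => if i = n + 1 then A (n + 1) ∩ E else A i) :=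
      funext fun s => happ (κ s) E hE
    rw [this]
    exact measurable_cylProb_kernel κ (n + 1) _ (fun i => by
      by_cases h : i = n + 1 <;> simp [h, (hA (n + 1)).inter hE, hA i])

lemma lintegral_cylM (κ : Kernel S S) [IsSFiniteKernel κ] {B : Set S} (hB : MeasurableSet B) :
    ∀ (n : ℕ) (μ : Measure S) (A : ℕ → Set S), (∀ i, MeasurableSet (A i)) →
      ∫⁻ s, κ s B ∂(cylM κ n μ A)
        = cylProb κ (n + 1) μ (fun i => if i = n + 1 then B else A i) := by
  intro n
  induction n with
  | zero =>
    intro μ A hA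
    rw [cylM]
    have hr : cylProb κ 1 μ (fun i => if i = 1 then B else A i)
        = ∫⁻ s in A 0, κ s B ∂μ := by
      rw [cylProb]
      congr 1
      all_goals try (funext s; rw [cylProb]; simp)
      all_goals try (congr 1; simp)
    rw [hr]
  | succ n ih =>
    intro μ A hA
    rw [cylM, Measure.lintegral_bind (cylM_aux κ n _ (fun i => hA (i + 1))).2.aemeasurable (κ.measurable_coe hB).aemeasurable]
    have hr : cylProb κ (n + 2) μ (fun i => if i = n + 2 then B else A i)
        = ∫⁻ s in A 0,
            cylProb κ (n + 1) (κ s) (fun i => if i = n + 1 then B else A (i + 1)) ∂μ := by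
      rw [cylProb]
      congr 1
      all_goals try (funext s; congr 1; funext i; by_cases h : i = n + 1 <;> simp [h])
      all_goals try (congr 1; simp)
    rw [hr]
    refine lintegral_congr fun s => ?_
    rw [ih (κ s) _ (fun i => hA (i + 1))]

lemma measurableSet_evGF {B : Set S} (hB : MeasurableSet B) : MeasurableSet (evGF B) := by
  have : evGF B = ⋂ n, ⋃ k, ⋃ (_ : n ≤ k), (fun ρ : ℕ → S => ρ k) ⁻¹' B := by
    ext ρ; simp [evGF]
  rw [this]
  exact MeasurableSet.iInter fun n => MeasurableSet.iUnion fun k =>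
    MeasurableSet.iUnion fun _ => measurable_pi_apply k hB

/-- Key null set: hitting the avoid set at time `k` and `B'` at time `m ≥ k` has probability 0. -/
lemma cross_null (κ : Kernel S S) [IsMarkovKernel κ]
    (P : Measure S → Measure (ℕ → S)) (hP : IsPathMeasure κ P)
    (μ : Measure S) (hμ : IsProbabilityMeasure μ)
    (B : Set S) (hB : MeasurableSet B) (B' : Set S) (hB' : B' ∈ PreProb P B)
    (k m : ℕ) (hkm : k ≤ m) :
    P μ {ρ | ρ k ∈ avoid P B ∧ ρ m ∈ B'} = 0 := by
  obtain ⟨hB'm, hstep⟩ := hB'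
  have hav : MeasurableSet (avoid P B) := measurableSet_avoid κ P hP hB
  set A : ℕ → Set S := fun i =>
    (if i = k then avoid P B else Set.univ) ∩ (if i = m then B' else Set.univ) with hAdef
  have hA : ∀ i, MeasurableSet (A i) := fun i => by
    refine MeasurableSet.inter ?_ ?_ <;> split <;> simp [hav, hB'm]
  have hCeq : {ρ : ℕ → S | ρ k ∈ avoid P B ∧ ρ m ∈ B'} = {ρ | ∀ i ≤ m, ρ i ∈ A i} := by
    ext ρ
    simp only [Set.mem_setOf_eq, hAdef, Set.mem_inter_iff]
    constructor
    · rintro ⟨h1, h2⟩ i _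
      constructor <;> split <;> simp_all
    · intro h
      refine ⟨?_, ?_⟩
      · have := (h k hkm).1; simpa using this
      · have := (h m le_rfl).2; simpa using this
  rw [hCeq, (hP μ hμ).2 m A hA]
  by_contra hc0
  set c := cylProb κ m μ A with hc
  have hcle : c ≤ 1 := by
    haveI := (hP μ hμ).1
    rw [hc, ← (hP μ hμ).2 m A hA]
    exact prob_le_one
  have hctop : c ≠ ⊤ := ne_top_of_le_ne_top one_ne_top hcle
  set ν : Measure S := c⁻¹ • cylM κ m μ A with hν
  have hν_apply : ∀ (E : Set S), MeasurableSet E →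
      ν E = c⁻¹ * cylProb κ m μ (fun i => if i = m then A m ∩ E else A i) := by
    intro E hE
    rw [hν, Measure.smul_apply, (cylM_aux κ m A hA).1 μ E hE, smul_eq_mul]
  have hν_univ : ν Set.univ = 1 := by
    rw [hν_apply Set.univ MeasurableSet.univ]
    have : (fun i => if i = m then A m ∩ Set.univ else A i) = A := by
      funext i; by_cases h : i = m <;> simp [h]
    rw [this, ← hc, ENNReal.inv_mul_cancel hc0 hctop]
  have hν_prob : IsProbabilityMeasure ν := ⟨hν_univ⟩
  have hν_B' : ν B' = 1 := by
    rw [hν_apply B' hB'm]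
    have : (fun i => if i = m then A m ∩ B' else A i) = A := by
      funext i
      by_cases h : i = m
      · subst h; simp [hAdef, Set.inter_assoc]
      · simp [h]
    rw [this, ← hc, ENNReal.inv_mul_cancel hc0 hctop]
  have hpos := hstep ν hν_prob hν_B'
  -- rewrite the event as a cylinder
  set A' : ℕ → Set S := fun i => if i = 0 then B' else if i = 1 then B else Set.univ with hA'
  have hA'm : ∀ i, MeasurableSet (A' i) := fun i => by
    simp only [hA']; split
    · exact hB'm
    · split
      · exact hB
      · exact MeasurableSet.univ
  have hev : {ρ : ℕ → S | ρ 0 ∈ B' ∧ ρ 1 ∈ B} = {ρ | ∀ i ≤ 1, ρ i ∈ A' i} := by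
    ext ρ
    simp only [Set.mem_setOf_eq, hA']
    constructor
    · rintro ⟨h0, h1⟩ i hi
      interval_cases i <;> simp [h0, h1]
    · intro h
      exact ⟨by simpa using h 0 (by norm_num), by simpa using h 1 le_rfl⟩
  rw [hev, (hP ν hν_prob).2 1 A' hA'm] at hpos
  have hcyl1 : cylProb κ 1 ν A' = ∫⁻ s in B', κ s B ∂ν := by
    rw [cylProb]
    have h1 : (fun s => cylProb κ 0 (κ s) (fun i => A' (i + 1))) = fun s => κ s B := by
      funext s; rw [cylProb]; simp [hA']
    have h2 : A' 0 = B' := by simp [hA']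
    rw [h1, h2]
  rw [hcyl1] at hpos
  have hle : ∫⁻ s in B', κ s B ∂ν ≤ c⁻¹ * cylProb κ (m + 1) μ (fun i => if i = m + 1 then B else A i) := by
    calc ∫⁻ s in B', κ s B ∂ν ≤ ∫⁻ s, κ s B ∂ν := setLIntegral_le_lintegral _ _
      _ = c⁻¹ * ∫⁻ s, κ s B ∂(cylM κ m μ A) := by rw [hν, lintegral_smul_measure, smul_eq_mul]
      _ = c⁻¹ * cylProb κ (m + 1) μ (fun i => if i = m + 1 then B else A i) := by
          rw [lintegral_cylM κ hB m μ A hA]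
  have hzero : cylProb κ (m + 1) μ (fun i => if i = m + 1 then B else A i) = 0 := by
    refine cylProb_zero_of_avoid κ P hP B k (m + 1) (by omega) μ _ ?_ ?_ ?_
    · intro i
      by_cases h : i = m + 1 <;> simp [h, hB, hA i]
    · have hk : k ≠ m + 1 := by omega
      intro s hs
      simp only [hk, if_false] at hs
      have hs1 := hs.1
      simpa using hs1
    · simp
  rw [hzero, mul_zero] at hle
  exact absurd (lt_of_lt_of_le hpos hle) (by simp)

/-- strong decisiveness w.r.t. `B` from `μ` implies fairness w.r.t. `B` from `μ`. -/
theorem statement_6 {S : Type*} [MeasurableSpace S]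
    (κ : Kernel S S) [IsMarkovKernel κ]
    (P : Measure S → Measure (ℕ → S)) (hP : IsPathMeasure κ P)
    (μ : Measure S) (hμ : IsProbabilityMeasure μ)
    (B : Set S) (hB : MeasurableSet B)
    (hsd : StronglyDecisive P μ B) :
    ∀ B' ∈ PreProb P B, 0 < P μ (evGF B') →
      P μ (evGF B ∩ evGF B') = P μ (evGF B') := by
  intro B' hB' _
  haveI := (hP μ hμ).1
  have hav : MeasurableSet (avoid P B) := measurableSet_avoid κ P hP hB
  -- the bad set is null
  have hN : P μ (evF (avoid P B) ∩ evGF B') = 0 := by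
    have hsub : evF (avoid P B) ∩ evGF B'
        ⊆ ⋃ (k : ℕ), ⋃ (m : ℕ), {ρ : ℕ → S | ρ k ∈ avoid P B ∧ ρ (k + m) ∈ B'} := by
      rintro ρ ⟨⟨k, hk⟩, hGF⟩
      obtain ⟨j, hkj, hj⟩ := hGF k
      refine Set.mem_iUnion.mpr ⟨k, Set.mem_iUnion.mpr ⟨j - k, ⟨hk, ?_⟩⟩⟩
      have : k + (j - k) = j := by omega
      rw [this]; exact hj
    refine measure_mono_null hsub ?_
    refine measure_iUnion_null fun k => measure_iUnion_null fun m =>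
      cross_null κ P hP μ hμ B hB B' hB' k (k + m) (by omega)
  have hU : MeasurableSet (evGF B ∪ evF (avoid P B)) :=
    (measurableSet_evGF hB).union (measurableSet_evF hav)
  have hcompl : P μ ((evGF B ∪ evF (avoid P B))ᶜ) = 0 := by
    rw [measure_compl hU (measure_ne_top _ _), hsd, measure_univ, tsub_self]
  refine le_antisymm (measure_mono Set.inter_subset_right) ?_
  have hsub2 : evGF B' ⊆ (evGF B ∩ evGF B')
      ∪ ((evGF B ∪ evF (avoid P B))ᶜ ∪ (evF (avoid P B) ∩ evGF B')) := by
    intro ρ hρ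
    by_cases h1 : ρ ∈ evGF B
    · exact Or.inl ⟨h1, hρ⟩
    by_cases h2 : ρ ∈ evF (avoid P B)
    · exact Or.inr (Or.inr ⟨h2, hρ⟩)
    · exact Or.inr (Or.inl (fun h => h.elim h1 h2))
  calc P μ (evGF B') ≤ P μ ((evGF B ∩ evGF B')
      ∪ ((evGF B ∪ evF (avoid P B))ᶜ ∪ (evF (avoid P B) ∩ evGF B'))) := measure_mono hsub2
    _ ≤ P μ (evGF B ∩ evGF B')
        + P μ ((evGF B ∪ evF (avoid P B))ᶜ ∪ (evF (avoid P B) ∩ evGF B')) := measure_union_le _ _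
    _ ≤ P μ (evGF B ∩ evGF B')
        + (P μ ((evGF B ∪ evF (avoid P B))ᶜ) + P μ (evF (avoid P B) ∩ evGF B')) := by
        exact add_le_add le_rfl (measure_union_le _ _)
    _ = P μ (evGF B ∩ evGF B') := by rw [hcompl, hN, add_zero, add_zero]


end STS
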